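/- arXiv:1403.7837 — 2 statements merged into one kernel-verified Lean document; each statement's English description precedes it below -/
import Mathlib

section
/- Let h₁,…,hₙ be independent real random variables each with density bounded by ρ₀, and let 0 < s < 1. Let D₁,…,Dₙ be denominators of the form D_k = 2·(sum over i in S_k of h_i) + a_k, where the sets S_k ⊆ {1,…,n} satisfy the hierarchical property that each D_k contains at least one index not appearing in any D_j with j < k. Then E ∏_{k=1}^n |D_k|^{−s} ≤ ρ₁ⁿ, where ρ₁ depends only on ρ₀ and s. -/
open MeasureTheory ENNReal


lemma meas_phi (s : ℝ) : Measurable (fun u : ℝ => ENNReal.ofReal (|u| ^ (-s))) := by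
  refine Measurable.ennreal_ofReal ?_
  refine measurable_of_continuousOn_compl_singleton (0:ℝ) ?_
  exact ContinuousOn.rpow_const (continuous_abs.continuousOn)
    (fun x hx => Or.inl (abs_ne_zero.mpr hx))

lemma half_int {s : ℝ} (hs1 : s < 1) :
    ∫⁻ u in Set.Ioc (0:ℝ) 1, ENNReal.ofReal (u ^ (-s)) = ENNReal.ofReal (1/(1-s)) := by
  have hint : IntervalIntegrable (fun u : ℝ => u ^ (-s)) volume 0 1 :=
    intervalIntegral.intervalIntegrable_rpow' (by linarith)
  have hIoc : IntegrableOn (fun u : ℝ => u ^ (-s)) (Set.Ioc 0 1) volume := by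
    simpa [intervalIntegrable_iff, Set.uIoc_of_le (zero_le_one (α := ℝ))] using hint
  have hval : ∫ u in Set.Ioc (0:ℝ) 1, u ^ (-s) = 1/(1-s) := by
    have := integral_rpow (a := 0) (b := 1) (r := -s) (Or.inl (by linarith))
    rw [intervalIntegral.integral_of_le (zero_le_one)] at this
    rw [this, Real.one_rpow, Real.zero_rpow (by linarith)]
    ring_nf
  rw [← hval, ← ofReal_integral_eq_lintegral_ofReal hIoc ?_]
  · filter_upwards [ae_restrict_mem measurableSet_Ioc] with u hu
    exact Real.rpow_nonneg hu.1.le _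

lemma abs_int {s : ℝ} (hs : 0 < s) (hs1 : s < 1) :
    ∫⁻ u in Set.Icc (-1:ℝ) 1, ENNReal.ofReal (|u| ^ (-s)) = ENNReal.ofReal (2/(1-s)) := by
  have h1s : (0:ℝ) < 1 - s := by linarith
  have hpos : ∫⁻ u in Set.Ioc (0:ℝ) 1, ENNReal.ofReal (|u| ^ (-s))
      = ENNReal.ofReal (1/(1-s)) := by
    rw [← half_int hs1]
    refine setLIntegral_congr_fun measurableSet_Ioc ?_
    intro u hu
    show ENNReal.ofReal (|u| ^ (-s)) = ENNReal.ofReal (u ^ (-s))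
    rw [abs_of_pos hu.1]
  have hIcc : ∫⁻ u in Set.Icc (0:ℝ) 1, ENNReal.ofReal (|u| ^ (-s))
      = ENNReal.ofReal (1/(1-s)) := by
    rw [← hpos]
    exact (setLIntegral_congr Ioc_ae_eq_Icc).symm
  have hneg : ∫⁻ u in Set.Icc (-1:ℝ) 0, ENNReal.ofReal (|u| ^ (-s))
      = ENNReal.ofReal (1/(1-s)) := by
    have h1 : ∫⁻ u in Set.Icc (-1:ℝ) 0, ENNReal.ofReal (|u| ^ (-s))
        = ∫⁻ u, (Set.Icc (-1:ℝ) 0).indicator (fun u => ENNReal.ofReal (|u| ^ (-s))) u := by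
      rw [lintegral_indicator measurableSet_Icc]
    have h2 : (volume : Measure ℝ).map Neg.neg = volume := Measure.map_neg_eq_self _
    rw [h1, ← h2, lintegral_map ((meas_phi s).indicator measurableSet_Icc) measurable_neg]
    have h3 : ∀ u : ℝ, (Set.Icc (-1:ℝ) 0).indicator
          (fun u => ENNReal.ofReal (|u| ^ (-s))) (-u)
        = (Set.Icc (0:ℝ) 1).indicator (fun u => ENNReal.ofReal (|u| ^ (-s))) u := by
      intro u
      by_cases hu : u ∈ Set.Icc (0:ℝ) 1
      · rw [Set.indicator_of_mem hu,
          Set.indicator_of_mem (by constructor <;> [linarith [hu.2]; linarith [hu.1]]), abs_neg]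
      · rw [Set.indicator_of_notMem hu, Set.indicator_of_notMem (by
          intro hc; exact hu ⟨by linarith [hc.2], by linarith [hc.1]⟩)]
    simp_rw [h3]
    rw [lintegral_indicator measurableSet_Icc, hIcc]
  have hsplit : Set.Icc (-1:ℝ) 1 = Set.Icc (-1:ℝ) 0 ∪ Set.Ioc 0 1 :=
    (Set.Icc_union_Ioc_eq_Icc (by norm_num) (by norm_num)).symm
  have hdisj : Disjoint (Set.Icc (-1:ℝ) 0) (Set.Ioc 0 1) :=
    Set.disjoint_left.mpr fun x hx hx' => absurd hx.2 (not_le.mpr hx'.1)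
  rw [hsplit, lintegral_union measurableSet_Ioc hdisj, hneg, hpos,
    ← ENNReal.ofReal_add (by positivity) (by positivity)]
  congr 1
  ring

lemma one_var {ρ₀ s : ℝ} (hρ₀ : 0 < ρ₀) (hs : 0 < s) (hs1 : s < 1)
    (ν : Measure ℝ) [IsProbabilityMeasure ν]
    (hν : ν ≤ (ENNReal.ofReal ρ₀) • (volume : Measure ℝ)) (c : ℝ) :
    ∫⁻ y, ENNReal.ofReal (|2 * y + c| ^ (-s)) ∂ν ≤ ENNReal.ofReal (ρ₀ / (1 - s) + 1) := by
  have h1s : (0:ℝ) < 1 - s := by linarith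
  set T : ℝ → ℝ := fun y => 2 * y + c with hT
  have hTmeas : Measurable T := (measurable_const.mul measurable_id).add measurable_const
  set A : Set ℝ := T ⁻¹' Set.Icc (-1) 1 with hA
  have hAmeas : MeasurableSet A := hTmeas measurableSet_Icc
  have hG : Measurable (fun y => ENNReal.ofReal (|T y| ^ (-s))) := (meas_phi s).comp hTmeas
  have hsplit : ∫⁻ y, ENNReal.ofReal (|T y| ^ (-s)) ∂ν
      = (∫⁻ y in A, ENNReal.ofReal (|T y| ^ (-s)) ∂ν)
        + ∫⁻ y in Aᶜ, ENNReal.ofReal (|T y| ^ (-s)) ∂ν :=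
    (lintegral_add_compl _ hAmeas).symm
  have hcompl : ∫⁻ y in Aᶜ, ENNReal.ofReal (|T y| ^ (-s)) ∂ν ≤ 1 := by
    have hb : ∀ y ∈ Aᶜ, ENNReal.ofReal (|T y| ^ (-s)) ≤ 1 := by
      intro y hy
      have h1 : 1 ≤ |T y| := by
        simp only [hA, Set.mem_compl_iff, Set.mem_preimage, Set.mem_Icc, not_and_or, not_le] at hy
        rcases hy with h | h
        · exact le_abs.mpr (Or.inr (by linarith))
        · exact le_abs.mpr (Or.inl h.le)
      calc ENNReal.ofReal (|T y| ^ (-s)) ≤ ENNReal.ofReal 1 :=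
            ENNReal.ofReal_le_ofReal
              (Real.rpow_le_one_of_one_le_of_nonpos h1 (by linarith))
        _ = 1 := ENNReal.ofReal_one
    calc ∫⁻ y in Aᶜ, ENNReal.ofReal (|T y| ^ (-s)) ∂ν
        ≤ ∫⁻ _ in Aᶜ, 1 ∂ν := setLIntegral_mono' hAmeas.compl hb
      _ = ν Aᶜ := setLIntegral_one _
      _ ≤ 1 := prob_le_one
  have hmain : ∫⁻ y in A, ENNReal.ofReal (|T y| ^ (-s)) ∂ν
      ≤ ENNReal.ofReal (ρ₀ / (1 - s)) := by
    have h1 : ∫⁻ y in A, ENNReal.ofReal (|T y| ^ (-s)) ∂ν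
        ≤ ∫⁻ y in A, ENNReal.ofReal (|T y| ^ (-s)) ∂((ENNReal.ofReal ρ₀) • volume) :=
      lintegral_mono' (Measure.restrict_mono (le_refl A) hν) le_rfl
    have h2 : ∫⁻ y in A, ENNReal.ofReal (|T y| ^ (-s)) ∂((ENNReal.ofReal ρ₀) • volume)
        = ENNReal.ofReal ρ₀ * ∫⁻ y in A, ENNReal.ofReal (|T y| ^ (-s)) ∂volume := by
      rw [Measure.restrict_smul, lintegral_smul_measure, smul_eq_mul]
    have h3 : ∫⁻ y in A, ENNReal.ofReal (|T y| ^ (-s)) ∂volume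
        = ENNReal.ofReal (1/2) * ENNReal.ofReal (2/(1-s)) := by
      have e1 : ∫⁻ y in A, ENNReal.ofReal (|T y| ^ (-s)) ∂volume
          = ∫⁻ y, (Set.Icc (-1:ℝ) 1).indicator
              (fun u => ENNReal.ofReal (|u| ^ (-s))) (T y) ∂volume := by
        rw [← lintegral_indicator hAmeas]
        congr 1
      have e2 : (volume : Measure ℝ).map T = ENNReal.ofReal (1/2) • volume := by
        have : T = (fun y : ℝ => y + c) ∘ (fun y : ℝ => 2 * y) := by
          funext y; simp [hT]
        rw [this, ← Measure.map_map (measurable_add_const c) (measurable_const_mul 2),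
          Real.map_volume_mul_left (two_ne_zero), Measure.map_smul,
          map_add_right_eq_self volume c]
        norm_num [abs_of_pos]
      have e3 : ∫⁻ y, (Set.Icc (-1:ℝ) 1).indicator
            (fun u => ENNReal.ofReal (|u| ^ (-s))) (T y) ∂volume
          = ∫⁻ u, (Set.Icc (-1:ℝ) 1).indicator
              (fun u => ENNReal.ofReal (|u| ^ (-s))) u ∂((volume : Measure ℝ).map T) :=
        (lintegral_map ((meas_phi s).indicator measurableSet_Icc) hTmeas).symm
      rw [e1, e3, e2, lintegral_smul_measure, lintegral_indicator measurableSet_Icc,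
        abs_int hs hs1, smul_eq_mul]
    calc ∫⁻ y in A, ENNReal.ofReal (|T y| ^ (-s)) ∂ν
        ≤ ENNReal.ofReal ρ₀ * (ENNReal.ofReal (1/2) * ENNReal.ofReal (2/(1-s))) := by
          exact le_trans h1 (le_of_eq (by rw [h2, h3]))
      _ = ENNReal.ofReal (ρ₀ * ((1/2) * (2/(1-s)))) := by
          rw [← ENNReal.ofReal_mul (by norm_num : (0:ℝ) ≤ 1/2), ← ENNReal.ofReal_mul hρ₀.le]
      _ = ENNReal.ofReal (ρ₀ / (1 - s)) := by congr 1; field_simp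
  calc ∫⁻ y, ENNReal.ofReal (|2 * y + c| ^ (-s)) ∂ν
      = (∫⁻ y in A, ENNReal.ofReal (|T y| ^ (-s)) ∂ν)
        + ∫⁻ y in Aᶜ, ENNReal.ofReal (|T y| ^ (-s)) ∂ν := hsplit
    _ ≤ ENNReal.ofReal (ρ₀ / (1 - s)) + 1 := add_le_add hmain hcompl
    _ = ENNReal.ofReal (ρ₀ / (1 - s) + 1) := by
        rw [ENNReal.ofReal_add (by positivity) zero_le_one, ENNReal.ofReal_one]

lemma meas_g {n : ℕ} (s : ℝ) (S : Finset (Fin n)) (a : ℝ) :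
    Measurable (fun x : Fin n → ℝ => ENNReal.ofReal (|2 * ∑ i ∈ S, x i + a| ^ (-s))) := by
  have h1 : Measurable (fun x : Fin n → ℝ => 2 * ∑ i ∈ S, x i + a) :=
    (measurable_const.mul (Finset.measurable_sum S fun i _ => measurable_pi_apply i)).add
      measurable_const
  exact (meas_phi s).comp h1

lemma pi_bound {n : ℕ} (s : ℝ) (B : ℝ≥0∞) (hB : B ≠ ⊤)
    (ν : Fin n → Measure ℝ) [hprob : ∀ i, IsProbabilityMeasure (ν i)]
    (hint : ∀ (i : Fin n) (c : ℝ), ∫⁻ y, ENNReal.ofReal (|2 * y + c| ^ (-s)) ∂(ν i) ≤ B)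
    (S : Fin n → Finset (Fin n)) (a : Fin n → ℝ)
    (hS : ∀ k : Fin n, ∃ i ∈ S k, ∀ j : Fin n, j < k → i ∉ S j)
    (T : Finset (Fin n)) :
    ∫⁻ x, ∏ k ∈ T, ENNReal.ofReal (|2 * ∑ i ∈ S k, x i + a k| ^ (-s)) ∂(Measure.pi ν)
      ≤ B ^ T.card := by
  set g : Fin n → (Fin n → ℝ) → ℝ≥0∞ :=
    fun k x => ENNReal.ofReal (|2 * ∑ i ∈ S k, x i + a k| ^ (-s)) with hg
  obtain ⟨m, hm⟩ : ∃ m, T.card = m := ⟨_, rfl⟩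
  induction m generalizing T with
  | zero =>
    rw [Finset.card_eq_zero.mp hm]
    simp
  | succ m ih =>
    rw [hm]
    have hne : T.Nonempty := Finset.card_pos.mp (by omega)
    set k₀ := T.max' hne with hk₀
    have hk₀T : k₀ ∈ T := T.max'_mem hne
    obtain ⟨i₀, hi₀S, hi₀fresh⟩ := hS k₀
    set T' := T.erase k₀ with hT'
    have hcard' : T'.card = m := by
      rw [hT', Finset.card_erase_of_mem hk₀T, hm]
      omega
    have hfresh' : ∀ j ∈ T', i₀ ∉ S j := by
      intro j hj
      exact hi₀fresh j (lt_of_le_of_ne (T.le_max' j (Finset.mem_of_mem_erase hj))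
        (Finset.ne_of_mem_erase hj))
    have hgmeas : ∀ k, Measurable (g k) := fun k => meas_g s (S k) (a k)
    set f : (Fin n → ℝ) → ℝ≥0∞ := fun x => ∏ k ∈ T, g k x with hf
    set f' : (Fin n → ℝ) → ℝ≥0∞ := fun x => ∏ k ∈ T', g k x with hf'
    have hfmeas : Measurable f := Finset.measurable_prod T fun k _ => hgmeas k
    have hf'meas : Measurable f' := Finset.measurable_prod T' fun k _ => hgmeas k
    have hf'update : ∀ (x : Fin n → ℝ) (y : ℝ), f' (Function.update x i₀ y) = f' x := by
      intro x y
      refine Finset.prod_congr rfl fun j hj => ?_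
      have : ∑ i ∈ S j, Function.update x i₀ y i = ∑ i ∈ S j, x i :=
        Finset.sum_congr rfl fun i hi =>
          Function.update_of_ne (by rintro rfl; exact hfresh' j hj hi) _ _
      simp only [hg, this]
    -- key: inner integral bound
    have hkey : ∀ x : Fin n → ℝ,
        ∫⁻ y, f (Function.update x i₀ y) ∂(ν i₀) ≤ B * f' x := by
      intro x
      set c : ℝ := 2 * (∑ i ∈ (S k₀).erase i₀, x i) + a k₀ with hc
      have hupd : ∀ y : ℝ, f (Function.update x i₀ y)
          = ENNReal.ofReal (|2 * y + c| ^ (-s)) * f' x := by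
        intro y
        have hsum : ∑ i ∈ S k₀, Function.update x i₀ y i
            = y + ∑ i ∈ (S k₀).erase i₀, x i := by
          rw [← Finset.add_sum_erase _ _ hi₀S, Function.update_self]
          congr 1
          exact Finset.sum_congr rfl fun i hi =>
            Function.update_of_ne (Finset.ne_of_mem_erase hi) _ _
        have hgk₀ : g k₀ (Function.update x i₀ y) = ENNReal.ofReal (|2 * y + c| ^ (-s)) := by
          simp only [hg, hsum, hc]
          congr 2
          ring
        show ∏ k ∈ T, g k (Function.update x i₀ y) = _
        rw [← Finset.mul_prod_erase T _ hk₀T, hgk₀]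
        congr 1
        exact hf'update x y
      simp_rw [hupd]
      have hmc : Measurable fun y : ℝ => ENNReal.ofReal (|2 * y + c| ^ (-s)) :=
        (meas_phi s).comp ((measurable_const.mul measurable_id).add measurable_const)
      rw [lintegral_mul_const _ hmc]
      exact mul_le_mul_left (hint i₀ c) _
    -- Fubini via lmarginal
    set x₀ : Fin n → ℝ := fun _ => 0 with hx₀
    calc ∫⁻ x, f x ∂(Measure.pi ν) = (∫⋯∫⁻_Finset.univ, f ∂ν) x₀ :=
          lintegral_eq_lmarginal_univ x₀
      _ = (∫⋯∫⁻_(Finset.univ.erase i₀),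
            (fun x => ∫⁻ y, f (Function.update x i₀ y) ∂(ν i₀)) ∂ν) x₀ := by
          rw [lmarginal_erase' f hfmeas (Finset.mem_univ i₀)]
      _ ≤ (∫⋯∫⁻_(Finset.univ.erase i₀), (fun x => B * f' x) ∂ν) x₀ :=
          lmarginal_mono (fun x => hkey x) x₀
      _ = B * (∫⋯∫⁻_(Finset.univ.erase i₀), f' ∂ν) x₀ := by
          simp only [lmarginal]
          exact lintegral_const_mul' _ _ hB
      _ = B * (∫⋯∫⁻_Finset.univ, f' ∂ν) x₀ := by
          congr 1
          conv_rhs => rw [lmarginal_erase' f' hf'meas (Finset.mem_univ i₀)]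
          congr 1
          funext x
          simp only [hf'update]
          simp
      _ = B * ∫⁻ x, f' x ∂(Measure.pi ν) := by rw [← lintegral_eq_lmarginal_univ x₀]
      _ ≤ B * B ^ m := by
          have hihT := ih T' hcard'
          rw [hcard'] at hihT
          exact mul_le_mul_right hihT _
      _ = B ^ (m + 1) := (pow_succ' B m).symm

lemma map_pi {Ω : Type} [MeasurableSpace Ω] (μ : Measure Ω) [IsProbabilityMeasure μ]
    {n : ℕ} (h : Fin n → Ω → ℝ) (hm : ∀ i, Measurable (h i))
    (hind : ProbabilityTheory.iIndepFun h μ) :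
    μ.map (fun ω i => h i ω) = Measure.pi (fun i => μ.map (h i)) := by
  haveI : ∀ i, IsProbabilityMeasure (μ.map (h i)) :=
    fun i => Measure.isProbabilityMeasure_map (hm i).aemeasurable
  refine (Measure.pi_eq fun E hE => ?_).symm
  rw [Measure.map_apply (measurable_pi_lambda _ fun i => hm i) (MeasurableSet.univ_pi hE)]
  have hpre : (fun ω i => h i ω) ⁻¹' (Set.univ.pi E) = ⋂ i ∈ Finset.univ, h i ⁻¹' E i := by
    ext ω
    simp [Set.mem_pi]
  rw [hpre, hind.measure_inter_preimage_eq_mul Finset.univ (fun i _ => hE i)]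
  exact Finset.prod_congr rfl fun i _ =>
    (Measure.map_apply (hm i) (hE i)).symm

/-- Fractional-moment bound for a hierarchical family of denominators
`D_k = 2·∑_{i ∈ S_k} h_i + a_k`, where each `S_k` contains a fresh index not appearing
in any earlier `S_j`: `E ∏_k |D_k|^{−s} ≤ ρ₁^n` with `ρ₁` depending only on `ρ₀, s`. -/
theorem stmt2 (ρ₀ s : ℝ) (hρ₀ : 0 < ρ₀) (hs : 0 < s) (hs1 : s < 1) :
    ∃ ρ₁ : ℝ, 0 < ρ₁ ∧
      ∀ (Ω : Type) (_ : MeasurableSpace Ω) (μ : Measure Ω), IsProbabilityMeasure μ →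
      ∀ (n : ℕ) (h : Fin n → Ω → ℝ), (∀ i, Measurable (h i)) →
      ProbabilityTheory.iIndepFun h μ →
      ∀ (f : Fin n → ℝ → ℝ≥0∞),
      (∀ i x, f i x ≤ ENNReal.ofReal ρ₀) →
      (∀ i, μ.map (h i) = volume.withDensity (f i)) →
      ∀ (S : Fin n → Finset (Fin n)) (a : Fin n → ℝ),
      (∀ k : Fin n, ∃ i ∈ S k, ∀ j : Fin n, j < k → i ∉ S j) →
      ∫⁻ ω, ∏ k : Fin n,
          ENNReal.ofReal (|2 * ∑ i ∈ S k, h i ω + a k| ^ (-s)) ∂μ ≤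
        ENNReal.ofReal (ρ₁ ^ n) := by
  have h1s : (0:ℝ) < 1 - s := by linarith
  refine ⟨ρ₀ / (1 - s) + 1, by positivity, ?_⟩
  intro Ω mΩ μ hμprob n h hmeas hind f hfbd hfmap S a hS
  haveI : IsProbabilityMeasure μ := hμprob
  set ν : Fin n → Measure ℝ := fun i => μ.map (h i) with hν
  haveI hprob : ∀ i, IsProbabilityMeasure (ν i) :=
    fun i => Measure.isProbabilityMeasure_map (hmeas i).aemeasurable
  have hle : ∀ i, ν i ≤ (ENNReal.ofReal ρ₀) • (volume : Measure ℝ) := by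
    intro i
    rw [hν]
    simp only
    rw [hfmap i]
    refine Measure.le_iff.mpr fun A hA => ?_
    rw [withDensity_apply _ hA, Measure.smul_apply, smul_eq_mul]
    calc ∫⁻ x in A, f i x ∂volume ≤ ∫⁻ _ in A, ENNReal.ofReal ρ₀ ∂volume :=
          setLIntegral_mono' hA fun x _ => hfbd i x
      _ = ENNReal.ofReal ρ₀ * volume A := setLIntegral_const _ _
  have hint : ∀ (i : Fin n) (c : ℝ),
      ∫⁻ y, ENNReal.ofReal (|2 * y + c| ^ (-s)) ∂(ν i)
        ≤ ENNReal.ofReal (ρ₀ / (1 - s) + 1) :=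
    fun i c => one_var hρ₀ hs hs1 (ν i) (hle i) c
  have hF : Measurable (fun x : Fin n → ℝ =>
      ∏ k : Fin n, ENNReal.ofReal (|2 * ∑ i ∈ S k, x i + a k| ^ (-s))) :=
    Finset.measurable_prod _ fun k _ => meas_g s (S k) (a k)
  have hcomp : ∫⁻ ω, ∏ k : Fin n,
        ENNReal.ofReal (|2 * ∑ i ∈ S k, h i ω + a k| ^ (-s)) ∂μ
      = ∫⁻ x, ∏ k : Fin n,
          ENNReal.ofReal (|2 * ∑ i ∈ S k, x i + a k| ^ (-s)) ∂(Measure.pi ν) := by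
    rw [← map_pi μ h hmeas hind,
      lintegral_map hF (measurable_pi_lambda _ fun i => hmeas i)]
  rw [hcomp]
  calc ∫⁻ x, ∏ k : Fin n,
        ENNReal.ofReal (|2 * ∑ i ∈ S k, x i + a k| ^ (-s)) ∂(Measure.pi ν)
      ≤ (ENNReal.ofReal (ρ₀ / (1 - s) + 1)) ^ (Finset.univ : Finset (Fin n)).card :=
        pi_bound s _ ENNReal.ofReal_ne_top ν hint S a hS Finset.univ
    _ = ENNReal.ofReal ((ρ₀ / (1 - s) + 1) ^ n) := by
        rw [Finset.card_univ, Fintype.card_fin, ← ENNReal.ofReal_pow (by positivity)]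
end

section
/- Let A be an antisymmetric matrix and H₀ a diagonal matrix, and suppose J is a matrix with [A, H₀] = −J. Then e^A (H₀ + J) e^{−A} = H₀ + Σ_{n≥1} (n/(n+1)!) (ad A)ⁿ J, where ad A denotes the commutator map X ↦ [A, X]. -/
open Matrix

section AuxKAM

open NormedSpace

set_option maxHeartbeats 1000000 in
private lemma aux_kam {𝔸 : Type*} [NormedRing 𝔸] [NormedAlgebra ℝ 𝔸] [CompleteSpace 𝔸]
    (A H₀ J : 𝔸)
    (hcomm : A * H₀ - H₀ * A = -J) :
    NormedSpace.exp A * (H₀ + J) * NormedSpace.exp (-A) =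
      H₀ + ∑' n : ℕ,
        (((n + 1 : ℕ) : ℝ) / ((n + 2).factorial : ℝ)) •
          (fun X => A * X - X * A)^[n + 1] J := by
  let L : 𝔸 →L[ℝ] 𝔸 := ContinuousLinearMap.mul ℝ (𝔸) A
  let R : 𝔸 →L[ℝ] 𝔸 := (ContinuousLinearMap.mul ℝ (𝔸)).flip A
  let T : 𝔸 →L[ℝ] 𝔸 := L - R
  have hLapp : ∀ X : 𝔸, L X = A * X := fun X => rfl
  have hRapp : ∀ X : 𝔸, R X = X * A := fun X => rfl
  have hTapp : ∀ X : 𝔸, T X = A * X - X * A := fun X => rfl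
  -- powers of T are iterates of the commutator map
  have hTpow : ∀ (n : ℕ) (X : 𝔸), (T ^ n) X = (fun X => A * X - X * A)^[n] X := by
    intro n
    induction n with
    | zero => intro X; simp
    | succ n ih =>
        intro X
        rw [Function.iterate_succ_apply, pow_succ, ContinuousLinearMap.mul_apply, hTapp, ih]
  -- evaluation of operator exponentials
  have hexp_eval : ∀ (S : 𝔸 →L[ℝ] 𝔸) (X : 𝔸),
      exp S X = ∑' n : ℕ, ((n.factorial : ℝ))⁻¹ • (S ^ n) X := by
    intro S X
    have h := (ContinuousLinearMap.apply ℝ (𝔸) X).map_tsum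
      (expSeries_summable' (𝕂 := ℝ) S)
    have h2 : (∑' n : ℕ, ((n.factorial : ℝ))⁻¹ • S ^ n) X
        = ∑' n : ℕ, ((n.factorial : ℝ))⁻¹ • (S ^ n) X := by
      simpa only [ContinuousLinearMap.apply_apply, _root_.map_smul] using h
    rw [exp_eq_tsum (𝕂 := ℝ)]
    exact h2
  have hLpow : ∀ (n : ℕ) (X : 𝔸), (L ^ n) X = A ^ n * X := by
    intro n
    induction n with
    | zero => intro X; simp
    | succ n ih =>
        intro X
        rw [pow_succ, ContinuousLinearMap.mul_apply, ih, hLapp, pow_succ, mul_assoc]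
  have hRpow : ∀ (n : ℕ) (X : 𝔸), ((-R) ^ n) X = X * (-A) ^ n := by
    intro n
    induction n with
    | zero => intro X; simp
    | succ n ih =>
        intro X
        rw [pow_succ, ContinuousLinearMap.mul_apply, ContinuousLinearMap.neg_apply, hRapp, ih,
          pow_succ]
        have hAc : A * (-A) ^ n = (-A) ^ n * A := ((Commute.refl A).neg_right.pow_right n).eq
        simp [mul_assoc, hAc]
  -- exp of left multiplication
  have hL : ∀ X : 𝔸, exp L X = exp A * X := by
    intro X
    rw [hexp_eval]
    have h := ((ContinuousLinearMap.mul ℝ (𝔸)).flip X).map_tsum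
      (expSeries_summable' (𝕂 := ℝ) A)
    have hψ : (∑' n : ℕ, ((n.factorial : ℝ))⁻¹ • A ^ n) * X
        = ∑' n : ℕ, ((n.factorial : ℝ))⁻¹ • (A ^ n * X) := by
      simpa only [ContinuousLinearMap.flip_apply, ContinuousLinearMap.mul_apply',
        _root_.map_smul, smul_mul_assoc] using h
    rw [exp_eq_tsum (𝕂 := ℝ)]
    refine Eq.trans (tsum_congr fun n => ?_) hψ.symm
    rw [hLpow]
  -- exp of (negated) right multiplication
  have hR : ∀ X : 𝔸, exp (-R) X = X * exp (-A) := by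
    intro X
    rw [hexp_eval]
    have h := (ContinuousLinearMap.mul ℝ (𝔸) X).map_tsum
      (expSeries_summable' (𝕂 := ℝ) (-A))
    have hψ : X * (∑' n : ℕ, ((n.factorial : ℝ))⁻¹ • (-A) ^ n)
        = ∑' n : ℕ, ((n.factorial : ℝ))⁻¹ • (X * (-A) ^ n) := by
      simpa only [ContinuousLinearMap.mul_apply', _root_.map_smul, mul_smul_comm] using h
    rw [exp_eq_tsum (𝕂 := ℝ)]
    refine Eq.trans (tsum_congr fun n => ?_) hψ.symm
    rw [hRpow]
  -- L and -R commute
  have hc : Commute L (-R) := by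
    have : Commute L R := by
      apply ContinuousLinearMap.ext
      intro Y
      simp only [ContinuousLinearMap.mul_apply, hLapp, hRapp, mul_assoc]
    exact this.neg_right
  have hT : T = L + -R := by
    simp only [T, sub_eq_add_neg]
  -- the conjugation identity
  have hTexp : exp T = exp L * exp (-R) := by
    rw [hT]; exact exp_add_of_commute_of_mem_ball (𝕂 := ℝ) hc
      ((expSeries_radius_eq_top ℝ (𝔸 →L[ℝ] 𝔸)).symm ▸ edist_lt_top _ _)
      ((expSeries_radius_eq_top ℝ (𝔸 →L[ℝ] 𝔸)).symm ▸ edist_lt_top _ _)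
  have hConj : ∀ X : 𝔸, exp A * X * exp (-A) = exp T X := by
    intro X
    rw [hTexp, ContinuousLinearMap.mul_apply, hL, hR, mul_assoc]
  -- summability helpers
  have hnorm : Summable fun n : ℕ => ‖((n.factorial : ℝ))⁻¹ • T ^ n‖ :=
    norm_expSeries_summable' (𝕂 := ℝ) T
  have hsum_c : ∀ (c : ℕ → ℝ) (X : 𝔸), (∀ n, |c n| ≤ ((n.factorial : ℝ))⁻¹) →
      Summable fun n : ℕ => c n • (T ^ n) X := by
    intro c X hc'
    refine Summable.of_norm_bounded (g := fun n => ‖((n.factorial : ℝ))⁻¹ • T ^ n‖ * ‖X‖)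
      (hnorm.mul_right _) ?_
    intro n
    have h1 : ‖(T ^ n) X‖ ≤ ‖T ^ n‖ * ‖X‖ := (T ^ n).le_opNorm X
    have h2 : ‖((n.factorial : ℝ))⁻¹ • T ^ n‖ = ((n.factorial : ℝ))⁻¹ * ‖T ^ n‖ := by
      have := norm_smul (β := 𝔸 →L[ℝ] 𝔸) (((n.factorial : ℝ))⁻¹) (T ^ n)
      rw [this, Real.norm_eq_abs, abs_of_nonneg (by positivity)]
    calc ‖c n • (T ^ n) X‖ = |c n| * ‖(T ^ n) X‖ := by
          rw [norm_smul, Real.norm_eq_abs]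
      _ ≤ ((n.factorial : ℝ))⁻¹ * (‖T ^ n‖ * ‖X‖) :=
          mul_le_mul (hc' n) h1 (norm_nonneg _) (by positivity)
      _ = ‖((n.factorial : ℝ))⁻¹ • T ^ n‖ * ‖X‖ := by rw [h2]; ring
  have hfac_pos : ∀ n : ℕ, (0 : ℝ) < (n.factorial : ℝ) := by
    intro n; exact_mod_cast Nat.factorial_pos n
  have hfac_le : ∀ n : ℕ, ((n + 1).factorial : ℝ)⁻¹ ≤ ((n.factorial : ℝ))⁻¹ := by
    intro n
    apply inv_anti₀ (hfac_pos n)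
    exact_mod_cast Nat.factorial_le (Nat.le_succ n)
  have hsub_nonneg : ∀ n : ℕ,
      (0 : ℝ) ≤ ((n.factorial : ℝ))⁻¹ - (((n + 1).factorial : ℝ))⁻¹ := by
    intro n; linarith [hfac_le n]
  -- specific summable series
  have sInv : ∀ X : 𝔸, Summable fun n : ℕ => ((n.factorial : ℝ))⁻¹ • (T ^ n) X := by
    intro X
    exact hsum_c _ X fun n => le_of_eq (abs_of_nonneg (by positivity))
  have sShift : Summable fun n : ℕ => (((n + 1).factorial : ℝ))⁻¹ • (T ^ n) J := by
    refine hsum_c _ J fun n => ?_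
    rw [abs_of_nonneg (by positivity)]
    exact hfac_le n
  have sDiff : Summable fun n : ℕ =>
      (((n.factorial : ℝ))⁻¹ - (((n + 1).factorial : ℝ))⁻¹) • (T ^ n) J := by
    refine hsum_c _ J fun n => ?_
    rw [abs_of_nonneg (hsub_nonneg n)]
    have : (0 : ℝ) ≤ (((n + 1).factorial : ℝ))⁻¹ := by positivity
    linarith
  -- the commutator hypothesis expressed via T
  have hTH : T H₀ = -J := by rw [hTapp]; exact hcomm
  have hTsucc : ∀ n : ℕ, (T ^ (n + 1)) H₀ = -((T ^ n) J) := by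
    intro n
    rw [pow_succ, ContinuousLinearMap.mul_apply, hTH, map_neg]
  -- main computation
  have key : exp T (H₀ + J)
      = H₀ + ∑' n : ℕ, (((n.factorial : ℝ))⁻¹ - (((n + 1).factorial : ℝ))⁻¹) • (T ^ n) J := by
    rw [hexp_eval]
    have hsplit : (fun n : ℕ => ((n.factorial : ℝ))⁻¹ • (T ^ n) (H₀ + J))
        = fun n : ℕ => ((n.factorial : ℝ))⁻¹ • (T ^ n) H₀
            + ((n.factorial : ℝ))⁻¹ • (T ^ n) J := by
      funext n; rw [map_add, smul_add]
    rw [hsplit, Summable.tsum_add (sInv H₀) (sInv J)]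
    have h0 : ∑' n : ℕ, ((n.factorial : ℝ))⁻¹ • (T ^ n) H₀
        = H₀ - ∑' n : ℕ, (((n + 1).factorial : ℝ))⁻¹ • (T ^ n) J := by
      rw [Summable.tsum_eq_zero_add (sInv H₀)]
      have hzero : ((Nat.factorial 0 : ℝ))⁻¹ • (T ^ 0) H₀ = H₀ := by simp
      have hfun : (fun n : ℕ => (((n + 1).factorial : ℝ))⁻¹ • (T ^ (n + 1)) H₀)
          = fun n : ℕ => -((((n + 1).factorial : ℝ))⁻¹ • (T ^ n) J) := by
        funext n; rw [hTsucc, smul_neg]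
      rw [hzero, hfun, tsum_neg, ← sub_eq_add_neg]
    rw [h0, sub_add_eq_add_sub, add_sub_assoc, ← Summable.tsum_sub (sInv J) sShift]
    congr 1
    exact tsum_congr fun n => (sub_smul _ _ _).symm
  -- reindex the final series
  have hcoef : ∀ n : ℕ, (((n + 1).factorial : ℝ))⁻¹ - (((n + 1 + 1).factorial : ℝ))⁻¹
      = ((n + 1 : ℕ) : ℝ) / ((n + 2).factorial : ℝ) := by
    intro n
    have h2 : ((n + 2).factorial : ℝ) = ((n : ℝ) + 2) * ((n + 1).factorial : ℝ) := by
      rw [show n + 2 = (n + 1) + 1 from rfl, Nat.factorial_succ]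
      push_cast; ring
    have ha : ((n + 1).factorial : ℝ) ≠ 0 := ne_of_gt (hfac_pos _)
    have hb : ((n + 2).factorial : ℝ) ≠ 0 := ne_of_gt (hfac_pos _)
    have hb' : ((n + 1 + 1).factorial : ℝ) = ((n + 2).factorial : ℝ) := by norm_num
    rw [hb']
    field_simp [h2]
    push_cast
    linear_combination h2
  have hshift : ∑' n : ℕ, (((n.factorial : ℝ))⁻¹ - (((n + 1).factorial : ℝ))⁻¹) • (T ^ n) J
      = ∑' n : ℕ, (((n + 1 : ℕ) : ℝ) / ((n + 2).factorial : ℝ)) •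
          (fun X => A * X - X * A)^[n + 1] J := by
    rw [Summable.tsum_eq_zero_add sDiff]
    have hz : (((Nat.factorial 0 : ℝ))⁻¹ - (((0 + 1).factorial : ℝ))⁻¹) • (T ^ 0) J = 0 := by
      norm_num
    rw [hz, zero_add]
    exact tsum_congr fun n => by rw [hcoef n, hTpow]
  rw [hConj (H₀ + J), key, hshift]

end AuxKAM

/-- The ad-expansion identity of the KAM diagonalization step: if `A` is antisymmetric,
`H₀` is diagonal, and `[A, H₀] = −J`, then
`e^A (H₀ + J) e^{−A} = H₀ + Σ_{n≥1} (n/(n+1)!) (ad A)ⁿ J`. -/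
theorem stmt4 {N : ℕ} (A H₀ J : Matrix (Fin N) (Fin N) ℝ)
    (e : Fin N → ℝ) (hdiag : H₀ = Matrix.diagonal e)
    (hanti : Aᵀ = -A)
    (hcomm : A * H₀ - H₀ * A = -J) :
    NormedSpace.exp A * (H₀ + J) * NormedSpace.exp (-A) =
      H₀ + ∑' n : ℕ,
        (((n + 1 : ℕ) : ℝ) / ((n + 2).factorial : ℝ)) •
          (fun X => A * X - X * A)^[n + 1] J := by
  letI : SeminormedRing (Matrix (Fin N) (Fin N) ℝ) := Matrix.linftyOpSemiNormedRing
  letI : NormedRing (Matrix (Fin N) (Fin N) ℝ) := Matrix.linftyOpNormedRing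
  letI : NormedAlgebra ℝ (Matrix (Fin N) (Fin N) ℝ) := Matrix.linftyOpNormedAlgebra
  exact aux_kam A H₀ J hcomm
end
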